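/- Let E be a meet-semilattice and let A be the unitization over ℂ of the semigroup algebra MonoidAlgebra ℂ E. Let e₀, e₁, …, e_n ∈ E (n ≥ 0) and suppose that the element p := e₀ · (1 − e₁) ⋯ (1 − e_n) of A is nonzero. Then for every f ∈ E one has f · p = p in A if and only if f ⊓ e₀ = e₀. -/

import Mathlib

instance semilatticeInfCommSemigroup (E : Type*) [SemilatticeInf E] : CommSemigroup E where
  mul := (· ⊓ ·)
  mul_assoc := inf_assoc
  mul_comm := inf_comm

noncomputable def semilatticeBasis {E : Type*} [SemilatticeInf E] (e : E) :
    Unitization ℂ (MonoidAlgebra ℂ E) :=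
  Unitization.inr (MonoidAlgebra.single e (1 : ℂ))

lemma semilatticeBasis_mul {E : Type*} [SemilatticeInf E] (e f : E) :
    semilatticeBasis e * semilatticeBasis f = semilatticeBasis (e ⊓ f) := by
  simp only [semilatticeBasis, ← Unitization.inr_mul, MonoidAlgebra.single_mul_single, one_mul]
  rfl

lemma prod_zero_of_le {E : Type*} [SemilatticeInf E] (e₀ : E) (es : List E)
    (h : ∃ e ∈ es, e₀ ≤ e) :
    semilatticeBasis e₀ * (es.map fun e => 1 - semilatticeBasis e).prod = 0 := by
  induction es with
  | nil => simp at h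
  | cons a l ih =>
    simp only [List.map_cons, List.prod_cons]
    rcases h with ⟨e, he, hle⟩
    rcases List.mem_cons.mp he with rfl | hmem
    · rw [← mul_assoc, mul_sub, mul_one, semilatticeBasis_mul, inf_eq_left.mpr hle,
        sub_self, zero_mul]
    · rw [mul_left_comm, ih ⟨e, hmem, hle⟩, mul_zero]

lemma key_structure {E : Type*} [SemilatticeInf E] (e₀ : E) (es : List E)
    (h : ∀ e ∈ es, ¬ e₀ ≤ e) :
    ∃ q : MonoidAlgebra ℂ E,
      semilatticeBasis e₀ * (es.map fun e => 1 - semilatticeBasis e).prod =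
        Unitization.inr q ∧ q.coeff e₀ = 1 ∧ ∀ g ∈ q.coeff.support, g ≤ e₀ := by
  classical
  induction es with
  | nil =>
    refine ⟨MonoidAlgebra.single e₀ 1, by simp [semilatticeBasis], by simp, ?_⟩
    intro g hg
    rw [MonoidAlgebra.coeff_single, Finsupp.mem_support_iff] at hg
    by_contra hne
    rw [Finsupp.single_apply_eq_zero.mpr] at hg
    · exact hg rfl
    · intro hgg; exact absurd hgg.symm (by intro hh; subst hh; exact hne le_rfl)
  | cons a l ih =>
    obtain ⟨q, hq, hq1, hqs⟩ := ih (fun e he => h e (List.mem_cons_of_mem a he))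
    refine ⟨q - q * MonoidAlgebra.single a 1, ?_, ?_, ?_⟩
    · simp only [List.map_cons, List.prod_cons]
      rw [mul_left_comm, mul_comm (1 - semilatticeBasis a), hq, mul_sub, mul_one,
        Unitization.inr_sub, Unitization.inr_mul, semilatticeBasis]
    · have hz : (q * (MonoidAlgebra.single a 1 : MonoidAlgebra ℂ E)).coeff e₀ = 0 := by
        by_contra hne
        have : e₀ ∈ (q * (MonoidAlgebra.single a 1 : MonoidAlgebra ℂ E)).coeff.support := Finsupp.mem_support_iff.mpr hne
        have := MonoidAlgebra.support_coeff_mul_subset q (MonoidAlgebra.single a 1) this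
        rw [Finset.mem_mul] at this
        obtain ⟨y, hy, z, hz, hyz⟩ := this
        have hz' : z = a := by
          rw [MonoidAlgebra.coeff_single] at hz
          have := Finsupp.support_single_subset hz
          simpa using this
        have he : e₀ = y ⊓ a := by rw [← hz']; exact hyz.symm
        exact h a (List.mem_cons_self (a := a) (l := l)) (he ▸ inf_le_right)
      rw [MonoidAlgebra.coeff_sub, Finsupp.sub_apply, hq1, hz, sub_zero]
    · intro g hg
      rw [MonoidAlgebra.coeff_sub] at hg
      have := Finsupp.support_sub hg
      rw [Finset.mem_union] at this
      rcases this with hgs | hgs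
      · exact hqs g hgs
      · have := MonoidAlgebra.support_coeff_mul_subset q (MonoidAlgebra.single a 1) hgs
        rw [Finset.mem_mul] at this
        obtain ⟨y, hy, z, hz, hyz⟩ := this
        have : g = y ⊓ z := hyz.symm
        exact le_trans (this ▸ inf_le_left) (hqs y hy)

theorem stmt_0 {E : Type*} [SemilatticeInf E] (e₀ : E) (es : List E)
    (p : Unitization ℂ (MonoidAlgebra ℂ E))
    (hp : p = semilatticeBasis e₀ * (es.map fun e => 1 - semilatticeBasis e).prod)
    (hp0 : p ≠ 0) (f : E) :
    semilatticeBasis f * p = p ↔ f ⊓ e₀ = e₀ := by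
  classical
  have hnl : ∀ e ∈ es, ¬ e₀ ≤ e := by
    intro e he hle
    exact hp0 (hp.trans (prod_zero_of_le e₀ es ⟨e, he, hle⟩))
  obtain ⟨q, hq, hq1, hqs⟩ := key_structure e₀ es hnl
  constructor
  · intro hfp
    rw [hp, hq] at hfp
    have : MonoidAlgebra.single f (1:ℂ) * q = q := by
      apply Unitization.inr_injective (R := ℂ)
      rw [Unitization.inr_mul]
      exact hfp
    have he₀ : e₀ ∈ (MonoidAlgebra.single f (1:ℂ) * q).coeff.support := by
      rw [this, Finsupp.mem_support_iff, hq1]; exact one_ne_zero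
    have := MonoidAlgebra.support_coeff_mul_subset (MonoidAlgebra.single f (1:ℂ)) q he₀
    rw [Finset.mem_mul] at this
    obtain ⟨y, hy, z, hz, hyz⟩ := this
    have hy' : y = f := by
      have := Finsupp.support_single_subset hy
      simpa using this
    have he : e₀ = f ⊓ z := by rw [← hy']; exact hyz.symm
    exact inf_eq_right.mpr (he ▸ inf_le_left)
  · intro hfe
    rw [hp, ← mul_assoc, semilatticeBasis_mul, hfe]
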